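/- Let M be a monoid and S a submonoid of M. Then there exist a topological space X and an injective monoid homomorphism φ : M → M(X), where M(X) is the monoid of all maps X → X under composition, such that for every m ∈ M, the map φ(m) is continuous if and only if m ∈ S. -/

import Mathlib

theorem stmt_8 {M : Type u} [Monoid M] (S : Submonoid M) :
    ∃ (X : Type u) (_ : TopologicalSpace X) (φ : M →* Function.End X),
      Function.Injective φ ∧ ∀ m : M, Continuous (φ m) ↔ m ∈ S := by
  classical
  let X : Type u := M ⊕ PUnit.{u+1}
  let f : M → X → X := fun m => Sum.map (fun x => m * x) id
  have hf_comp : ∀ m n : M, f (m * n) = f m ∘ f n := by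
    intro m n; funext x; cases x <;> simp [f, mul_assoc]
  have hf_one : f 1 = id := by funext x; cases x <;> simp [f]
  let P : Set X → Prop := fun U => ∀ s ∈ S, Sum.inl s ∈ U ∨ f s ⁻¹' U = ∅
  have hP_univ : P Set.univ := fun s _ => Or.inl trivial
  have hP_inter : ∀ U V, P U → P V → P (U ∩ V) := by
    intro U V hU hV s hs
    rcases hU s hs with h1 | h1
    · rcases hV s hs with h2 | h2
      · exact Or.inl ⟨h1, h2⟩
      · refine Or.inr ?_
        rw [Set.eq_empty_iff_forall_notMem] at h2 ⊢
        exact fun x hx => h2 x hx.2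
    · refine Or.inr ?_
      rw [Set.eq_empty_iff_forall_notMem] at h1 ⊢
      exact fun x hx => h1 x hx.1
  have hP_sUnion : ∀ 𝒮 : Set (Set X), (∀ U ∈ 𝒮, P U) → P (⋃₀ 𝒮) := by
    intro 𝒮 h𝒮 s hs
    by_cases hmem : ∃ U ∈ 𝒮, Sum.inl s ∈ U
    · rcases hmem with ⟨U, hU, hsU⟩
      exact Or.inl ⟨U, hU, hsU⟩
    · push_neg at hmem
      refine Or.inr ?_
      rw [Set.eq_empty_iff_forall_notMem]
      rintro x ⟨U, hU, hxU⟩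
      rcases h𝒮 U hU s hs with h | h
      · exact hmem U hU h
      · rw [Set.eq_empty_iff_forall_notMem] at h
        exact h x hxU
  let τ : TopologicalSpace X := ⟨P, hP_univ, hP_inter, hP_sUnion⟩
  let φ : M →* Function.End X :=
    { toFun := f
      map_one' := hf_one
      map_mul' := hf_comp }
  refine ⟨X, τ, φ, ?_, ?_⟩
  · intro m n h
    have := congrFun h (Sum.inl 1)
    simp only [φ, f, MonoidHom.coe_mk, OneHom.coe_mk, Sum.map_inl, mul_one] at this
    have h2 : (Sum.inl (m * 1) : X) = Sum.inl (n * 1) := this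
    simpa using h2
  · intro m
    constructor
    · intro hc
      by_contra hm
      by_cases hconst : ∀ x : M, m * x = m
      · set U : Set X := (Sum.inl '' (S : Set M)) ∪ {Sum.inr PUnit.unit} with hU
        have hUopen : P U := by
          intro s hs
          exact Or.inl (Or.inl ⟨s, hs, rfl⟩)
        have hpre : P (f m ⁻¹' U) := hc.isOpen_preimage U hUopen
        rcases hpre 1 S.one_mem with h | h
        · simp only [Set.mem_preimage, f, Sum.map_inl, mul_one] at h
          rcases h with ⟨t, ht, hteq⟩ | h
          · exact hm (Sum.inl_injective hteq ▸ ht)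
          · simp at h
        · rw [hf_one] at h
          simp only [Set.preimage_id] at h
          rw [Set.eq_empty_iff_forall_notMem] at h
          exact h (Sum.inr PUnit.unit) (Or.inr rfl)
      · push_neg at hconst
        rcases hconst with ⟨x₀, hx₀⟩
        set U : Set X := (Sum.inl '' (S : Set M)) ∪ {Sum.inl (m * x₀)} with hU
        have hUopen : P U := by
          intro s hs
          exact Or.inl (Or.inl ⟨s, hs, rfl⟩)
        have hpre : P (f m ⁻¹' U) := hc.isOpen_preimage U hUopen
        rcases hpre 1 S.one_mem with h | h
        · simp only [Set.mem_preimage, f, Sum.map_inl, mul_one] at h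
          rcases h with ⟨t, ht, hteq⟩ | h
          · exact hm (Sum.inl_injective hteq ▸ ht)
          · simp only [Set.mem_singleton_iff] at h
            exact hx₀ (Sum.inl_injective h).symm
        · rw [hf_one] at h
          simp only [Set.preimage_id] at h
          rw [Set.eq_empty_iff_forall_notMem] at h
          exact h (Sum.inl x₀) (Or.inr rfl)
    · intro hmS
      show @Continuous X X τ τ (f m)
      rw [continuous_def]
      intro U hUopen
      show P _
      intro t ht
      have hUo : P U := hUopen
      rcases hUo (m * t) (S.mul_mem hmS ht) with h | h
      · exact Or.inl h
      · refine Or.inr ?_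
        have hφ : (φ m : X → X) = f m := rfl
        show f t ⁻¹' (f m ⁻¹' U) = ∅
        rw [← Set.preimage_comp, ← hf_comp]
        exact h
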